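/- Let H be Hermitian on a finite-dimensional space, A an operator, and f : ℝ → ℂ integrable. Define the filtered operator Â_f := (1/√(2π)) ∫_{−∞}^{∞} e^{iHt} A e^{−iHt} f(t) dt. Then Â_f = Σ_ν A_ν f̂(−ν), where f̂(ν) := (1/√(2π)) ∫ e^{−iνt} f(t) dt is the Fourier transform of f and the sum runs over Bohr frequencies of H. -/

import Mathlib

open Matrix Finset Complex NormedSpace MeasureTheory

attribute [local instance] Matrix.frobeniusNormedAddCommGroup Matrix.frobeniusNormedSpace

noncomputable section

/-- The rank-one operator `|ψ i⟩⟨ψ i|`. -/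
def ketbra {d : ℕ} (ψ : Fin d → Fin d → ℂ) (i : Fin d) : Matrix (Fin d) (Fin d) ℂ :=
  Matrix.vecMulVec (ψ i) (star (ψ i))

/-- The set of Bohr frequencies `{E i - E j}` of the Hamiltonian. -/
def bohrSet {d : ℕ} (E : Fin d → ℝ) : Finset ℝ :=
  Finset.image (fun p : Fin d × Fin d => E p.1 - E p.2) Finset.univ

/-- The Bohr-frequency component `A_ν = ∑_{E i - E j = ν} |ψ i⟩⟨ψ i| A |ψ j⟩⟨ψ j|`. -/
def bohrComp {d : ℕ} (ψ : Fin d → Fin d → ℂ) (E : Fin d → ℝ)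
    (A : Matrix (Fin d) (Fin d) ℂ) (ν : ℝ) : Matrix (Fin d) (Fin d) ℂ :=
  ∑ i, ∑ j, if E i - E j = ν then ketbra ψ i * A * ketbra ψ j else 0

/-- Heisenberg evolution `A(t) = e^{iHt} A e^{-iHt}`. -/
def heis {d : ℕ} (H A : Matrix (Fin d) (Fin d) ℂ) (t : ℝ) : Matrix (Fin d) (Fin d) ℂ :=
  NormedSpace.exp ((I * (t : ℂ)) • H) * A * NormedSpace.exp ((-(I * (t : ℂ))) • H)

/-- The filtered operator `Â_f = (1/√(2π)) ∫ A(t) f(t) dt`. -/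
def filtered {d : ℕ} (H A : Matrix (Fin d) (Fin d) ℂ) (f : ℝ → ℂ) :
    Matrix (Fin d) (Fin d) ℂ :=
  ((Real.sqrt (2 * Real.pi) : ℂ))⁻¹ • ∫ t : ℝ, f t • heis H A t

/-- The Fourier transform `f̂(ν) = (1/√(2π)) ∫ e^{-iνt} f(t) dt`. -/
def fourier' (f : ℝ → ℂ) (ν : ℝ) : ℂ :=
  ((Real.sqrt (2 * Real.pi) : ℂ))⁻¹ * ∫ t : ℝ, Complex.exp (-I * (ν : ℂ) * (t : ℂ)) * f t

section aux

variable {d : ℕ} {ψ : Fin d → Fin d → ℂ} {E : Fin d → ℝ}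

lemma ketbra_mul_ketbra (horth : ∀ i j, star (ψ i) ⬝ᵥ ψ j = if i = j then (1 : ℂ) else 0)
    (i j : Fin d) : ketbra ψ i * ketbra ψ j = if i = j then ketbra ψ i else 0 := by
  have h := horth i j
  ext a b
  simp only [Matrix.mul_apply, ketbra, vecMulVec_apply, Pi.star_apply]
  have key : (∑ k, ψ i a * star (ψ i k) * (ψ j k * star (ψ j b)))
      = (∑ k, star (ψ i k) * ψ j k) * (ψ i a * star (ψ j b)) := by
    rw [Finset.sum_mul]; exact Finset.sum_congr rfl fun k _ => by ring
  rw [key]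
  simp only [dotProduct, Pi.star_apply] at h
  rw [h]
  split_ifs with hij
  · subst hij; simp [vecMulVec_apply]
  · simp

lemma pow_spectral (horth : ∀ i j, star (ψ i) ⬝ᵥ ψ j = if i = j then (1 : ℂ) else 0)
    (hcomplete : ∑ i, ketbra ψ i = 1) (n : ℕ) :
    (∑ i, (E i : ℂ) • ketbra ψ i) ^ n = ∑ i, ((E i : ℂ)) ^ n • ketbra ψ i := by
  induction n with
  | zero => simpa using hcomplete.symm
  | succ n ih =>
    rw [pow_succ, ih, Finset.sum_mul_sum]
    refine Finset.sum_congr rfl fun i _ => ?_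
    rw [Finset.sum_eq_single i]
    · rw [Matrix.smul_mul, Matrix.mul_smul, ketbra_mul_ketbra horth, if_pos rfl,
        smul_smul, pow_succ]
    · intro j _ hji
      rw [Matrix.smul_mul, Matrix.mul_smul, ketbra_mul_ketbra horth, if_neg (Ne.symm hji)]
      simp
    · intro h; exact absurd (Finset.mem_univ i) h

lemma exp_spectral (horth : ∀ i j, star (ψ i) ⬝ᵥ ψ j = if i = j then (1 : ℂ) else 0)
    (hcomplete : ∑ i, ketbra ψ i = 1) (z : ℂ) :
    NormedSpace.exp (z • ∑ i, (E i : ℂ) • ketbra ψ i)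
      = ∑ i, Complex.exp (z * E i) • ketbra ψ i := by
  rw [NormedSpace.exp_eq_tsum (𝕂 := ℂ)]
  have h1 : ∀ n : ℕ, (n.factorial : ℂ)⁻¹ • (z • ∑ i, (E i : ℂ) • ketbra ψ i) ^ n
      = ∑ i, ((z * E i) ^ n / n.factorial) • ketbra ψ i := by
    intro n
    rw [smul_pow, pow_spectral horth hcomplete, Finset.smul_sum, Finset.smul_sum]
    refine Finset.sum_congr rfl fun i _ => ?_
    rw [smul_smul, smul_smul, mul_pow]
    congr 1
    field_simp
  have h2 : (fun x : Matrix (Fin d) (Fin d) ℂ => ∑' n : ℕ, (n.factorial : ℂ)⁻¹ • x ^ n)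
      (z • ∑ i, (E i : ℂ) • ketbra ψ i)
      = ∑' n : ℕ, (n.factorial : ℂ)⁻¹ • (z • ∑ i, (E i : ℂ) • ketbra ψ i) ^ n := rfl
  rw [h2, tsum_congr h1, Summable.tsum_finsetSum (fun i _ =>
    (expSeries_div_summable (z * E i)).smul_const _)]
  refine Finset.sum_congr rfl fun i _ => ?_
  rw [(expSeries_div_summable (z * E i)).tsum_smul_const _, Complex.exp_eq_exp_ℂ,
    NormedSpace.exp_eq_tsum_div]

lemma heis_spectral (horth : ∀ i j, star (ψ i) ⬝ᵥ ψ j = if i = j then (1 : ℂ) else 0)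
    (hcomplete : ∑ i, ketbra ψ i = 1) {H A : Matrix (Fin d) (Fin d) ℂ}
    (hH : H = ∑ i, (E i : ℂ) • ketbra ψ i) (t : ℝ) :
    heis H A t = ∑ i, ∑ j,
      Complex.exp (I * t * ((E i : ℂ) - (E j : ℂ))) • (ketbra ψ i * A * ketbra ψ j) := by
  rw [heis, hH, exp_spectral horth hcomplete, exp_spectral horth hcomplete,
    Finset.sum_mul, Finset.sum_mul]
  refine Finset.sum_congr rfl fun i _ => ?_
  rw [Finset.mul_sum]
  refine Finset.sum_congr rfl fun j _ => ?_
  rw [Matrix.smul_mul, Matrix.smul_mul, Matrix.mul_smul, smul_smul,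
    ← Complex.exp_add, Matrix.mul_assoc]
  congr 2
  ring

end aux

set_option maxHeartbeats 1000000 in
/-- `Â_f = ∑_ν A_ν f̂(−ν)`. -/
theorem filtered_eq_bohr_sum {d : ℕ} (ψ : Fin d → Fin d → ℂ) (E : Fin d → ℝ)
    (H A : Matrix (Fin d) (Fin d) ℂ) (f : ℝ → ℂ)
    (horth : ∀ i j, star (ψ i) ⬝ᵥ ψ j = if i = j then (1 : ℂ) else 0)
    (hcomplete : ∑ i, ketbra ψ i = 1)
    (hH : H = ∑ i, (E i : ℂ) • ketbra ψ i)
    (hf : Integrable f) :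
    filtered H A f = ∑ ν ∈ bohrSet E, fourier' f (-ν) • bohrComp ψ E A ν := by
  classical
  set M : Fin d → Fin d → Matrix (Fin d) (Fin d) ℂ := fun i j => ketbra ψ i * A * ketbra ψ j
    with hM
  -- integrability of each scalar piece
  have hint : ∀ i j : Fin d, Integrable
      (fun t : ℝ => Complex.exp (I * t * ((E i : ℂ) - (E j : ℂ))) * f t) := by
    intro i j
    refine hf.bdd_mul (c := 1) ?_ (Filter.Eventually.of_forall fun t => ?_)
    · exact (Complex.continuous_exp.comp
        ((continuous_const.mul Complex.continuous_ofReal).mul continuous_const)).aestronglyMeasurable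
    · rw [Complex.norm_exp]
      have : (I * (t : ℂ) * ((E i : ℂ) - (E j : ℂ))).re = 0 := by
        simp [Complex.mul_re]
      rw [this, Real.exp_zero]
  -- compute the integral
  have key : (∫ t : ℝ, f t • heis H A t)
      = ∑ i, ∑ j, (∫ t : ℝ, Complex.exp (I * t * ((E i : ℂ) - (E j : ℂ))) * f t) • M i j := by
    have h1 : ∀ t : ℝ, f t • heis H A t
        = ∑ i, ∑ j, (Complex.exp (I * t * ((E i : ℂ) - (E j : ℂ))) * f t) • M i j := by
      intro t
      rw [heis_spectral horth hcomplete hH, Finset.smul_sum]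
      refine Finset.sum_congr rfl fun i _ => ?_
      rw [Finset.smul_sum]
      refine Finset.sum_congr rfl fun j _ => ?_
      rw [smul_smul, mul_comm]
    simp only [h1]
    rw [integral_finset_sum _ (fun i _ => integrable_finset_sum _
      (fun j _ => ((hint i j).smul_const (M i j))))]
    refine Finset.sum_congr rfl fun i _ => ?_
    rw [integral_finset_sum _ (fun j _ => ((hint i j).smul_const (M i j)))]
    exact Finset.sum_congr rfl fun j _ => integral_smul_const _ _
  -- rewrite RHS
  have hrhs : (∑ ν ∈ bohrSet E, fourier' f (-ν) • bohrComp ψ E A ν)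
      = ∑ i, ∑ j, fourier' f (-(E i - E j)) • M i j := by
    simp only [bohrComp, Finset.smul_sum, smul_ite, smul_zero]
    rw [Finset.sum_comm]
    refine Finset.sum_congr rfl fun i _ => ?_
    rw [Finset.sum_comm]
    refine Finset.sum_congr rfl fun j _ => ?_
    have hmem : E i - E j ∈ bohrSet E :=
      Finset.mem_image.2 ⟨(i, j), Finset.mem_univ _, rfl⟩
    rw [show (∑ ν ∈ bohrSet E, if E i - E j = ν then fourier' f (-ν) • M i j else 0)
        = if E i - E j ∈ bohrSet E then fourier' f (-(E i - E j)) • M i j else 0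
      from Finset.sum_ite_eq (bohrSet E) (E i - E j) (fun ν => fourier' f (-ν) • M i j),
      if_pos hmem]
  have hsc : ∀ i j : Fin d,
      ((Real.sqrt (2 * Real.pi) : ℂ))⁻¹
        * (∫ t : ℝ, Complex.exp (I * t * ((E i : ℂ) - (E j : ℂ))) * f t)
      = fourier' f (-(E i - E j)) := by
    intro i j
    rw [fourier']
    congr 1
    refine integral_congr_ae (Filter.Eventually.of_forall fun t => ?_)
    have harg : -I * ((-(E i - E j) : ℝ) : ℂ) * (t : ℂ)
        = I * (t : ℂ) * ((E i : ℂ) - (E j : ℂ)) := by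
      push_cast; ring
    show Complex.exp (I * (t : ℂ) * ((E i : ℂ) - (E j : ℂ))) * f t
      = Complex.exp (-I * ((-(E i - E j) : ℝ) : ℂ) * (t : ℂ)) * f t
    rw [harg]
  rw [filtered, key, hrhs, Finset.smul_sum]
  refine Finset.sum_congr rfl fun i _ => ?_
  rw [Finset.smul_sum]
  refine Finset.sum_congr rfl fun j _ => ?_
  rw [smul_smul, hsc i j]

end
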